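/- Fix an integer n ≥ 1 and a real t ≥ 0. On ℝ let ν_t be the measure ν_t = e^{−t}·δ_0 + (1 − e^{−t})·λ, where δ_0 is the Dirac measure at 0 and λ is Lebesgue measure restricted to [0,1); let μ_t be the n-fold product measure of ν_t on ℝ^n and let π be the n-fold product of λ (both are probability measures). Then: (a) for every measurable set A ⊆ ℝ^n, μ_t(A) − π(A) ≤ 1 − (1 − e^{−t})^n; and (b) for A_0 = {x ∈ ℝ^n : x_i = 0 for some i}, one has μ_t(A_0) = 1 − (1 − e^{−t})^n and π(A_0) = 0. Consequently the total variation distance between μ_t and π equals 1 − (1 − e^{−t})^n. -/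

import Mathlib

open MeasureTheory

/-- The single-coordinate law at time `t`: `e^{−t}·δ₀ + (1 − e^{−t})·Leb|_{[0,1)}`. -/
noncomputable def nuT (t : ℝ) : Measure ℝ :=
  ENNReal.ofReal (Real.exp (-t)) • Measure.dirac 0 +
    ENNReal.ofReal (1 - Real.exp (-t)) • volume.restrict (Set.Ico 0 1)

open Set in
/-- Restriction of a finite product measure to a box is the product of restrictions. -/
theorem pi_restrict_box {n : ℕ} (ν : Fin n → Measure ℝ) [∀ i, SigmaFinite (ν i)]
    (s : Fin n → Set ℝ) :
    (Measure.pi ν).restrict (Set.pi univ s) = Measure.pi (fun i => (ν i).restrict (s i)) := by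
  refine (Measure.pi_eq fun u hu => ?_).symm
  rw [Measure.restrict_apply (MeasurableSet.univ_pi hu), ← Set.pi_inter_distrib,
    Measure.pi_pi]
  simp_rw [Measure.restrict_apply (hu _)]

theorem lebIco_restrict :
    (volume.restrict (Set.Ico (0:ℝ) 1)).restrict ({0}ᶜ : Set ℝ)
      = volume.restrict (Set.Ico (0:ℝ) 1) := by
  rw [Measure.restrict_restrict (measurableSet_singleton 0).compl]
  have h : ({0}ᶜ ∩ Set.Ico (0:ℝ) 1) = Set.Ioo 0 1 := by
    ext x
    simp [Set.mem_Ico, Set.mem_Ioo, and_comm, lt_iff_le_and_ne, eq_comm, and_assoc]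
  rw [h, Measure.restrict_congr_set Ioo_ae_eq_Ico]

theorem nuT_restrict (t : ℝ) :
    (nuT t).restrict ({0}ᶜ : Set ℝ) =
      ENNReal.ofReal (1 - Real.exp (-t)) • volume.restrict (Set.Ico 0 1) := by
  rw [nuT, Measure.restrict_add, Measure.restrict_smul, Measure.restrict_smul]
  have h1 : (Measure.dirac (0:ℝ)).restrict ({0}ᶜ : Set ℝ) = 0 := by
    rw [Measure.restrict_eq_zero]
    simp
  rw [h1, lebIco_restrict, smul_zero, zero_add]

instance nuT_finite (t : ℝ) : IsFiniteMeasure (nuT t) := by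
  constructor
  rw [nuT]
  simp [Real.volume_Ico, ENNReal.mul_lt_top, ENNReal.ofReal_lt_top]

theorem nuT_univ (t : ℝ) (ht : 0 ≤ t) : nuT t Set.univ = 1 := by
  rw [nuT]
  simp [Real.volume_Ico]
  rw [← ENNReal.ofReal_add (Real.exp_nonneg _)
    (by nlinarith [Real.exp_le_one_iff.mpr (neg_nonpos.mpr ht)] : (0:ℝ) ≤ 1 - Real.exp (-t))]
  simp

theorem pi_smul_const {n : ℕ} (c : ENNReal) (hc : c ≠ ⊤) (m : Measure ℝ) [IsFiniteMeasure m] :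
    Measure.pi (fun _ : Fin n => c • m) = c ^ n • Measure.pi (fun _ : Fin n => m) := by
  haveI : IsFiniteMeasure (c • m) := by
    constructor
    simp only [Measure.smul_apply, smul_eq_mul]
    exact ENNReal.mul_lt_top hc.lt_top (measure_lt_top m _)
  refine (Measure.pi_eq fun u hu => ?_)
  simp only [Measure.smul_apply, smul_eq_mul, Measure.pi_pi, Finset.prod_mul_distrib,
    Finset.prod_const, Finset.card_univ, Fintype.card_fin]

theorem limiting_coupling_is_maximal (n : ℕ) (hn : 1 ≤ n) (t : ℝ) (ht : 0 ≤ t)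
    (μ π : Measure (Fin n → ℝ))
    (hμ : μ = Measure.pi fun _ => nuT t)
    (hπ : π = Measure.pi fun _ => volume.restrict (Set.Ico 0 1)) :
    (∀ A : Set (Fin n → ℝ), MeasurableSet A →
      (μ A).toReal - (π A).toReal ≤ 1 - (1 - Real.exp (-t)) ^ n) ∧
    (μ {x | ∃ i, x i = 0}).toReal = 1 - (1 - Real.exp (-t)) ^ n ∧
    π {x | ∃ i, x i = 0} = 0 ∧
    IsGreatest {r : ℝ | ∃ A : Set (Fin n → ℝ), MeasurableSet A ∧
        r = (μ A).toReal - (π A).toReal}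
      (1 - (1 - Real.exp (-t)) ^ n) := by
  haveI : IsFiniteMeasure (volume.restrict (Set.Ico (0:ℝ) 1)) := by
    constructor; simp [Real.volume_Ico]
  haveI : IsProbabilityMeasure (volume.restrict (Set.Ico (0:ℝ) 1)) := by
    constructor; simp [Real.volume_Ico]
  haveI : IsProbabilityMeasure (nuT t) := ⟨nuT_univ t ht⟩
  haveI hμprob : IsProbabilityMeasure μ := hμ ▸ inferInstance
  haveI hπprob : IsProbabilityMeasure π := hπ ▸ inferInstance
  set q : ℝ := 1 - Real.exp (-t) with hqdef
  have hexp1 : Real.exp (-t) ≤ 1 := Real.exp_le_one_iff.mpr (neg_nonpos.mpr ht)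
  have hq0 : 0 ≤ q := by simp [hqdef]; linarith
  have hq1 : q ≤ 1 := by simp [hqdef]; positivity
  have hqn0 : 0 ≤ q ^ n := pow_nonneg hq0 n
  have hqn1 : q ^ n ≤ 1 := pow_le_one₀ hq0 hq1
  set B : Set (Fin n → ℝ) := Set.pi Set.univ (fun _ => ({0}ᶜ : Set ℝ)) with hBdef
  have hBmeas : MeasurableSet B :=
    MeasurableSet.univ_pi (fun _ => (measurableSet_singleton 0).compl)
  have hA₀ : {x : Fin n → ℝ | ∃ i, x i = 0} = Bᶜ := by
    ext x
    simp [hBdef, Set.mem_pi]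
  -- μ restricted to B
  have hμB : μ.restrict B = (ENNReal.ofReal q) ^ n • π := by
    rw [hμ, hπ, hBdef, pi_restrict_box]
    simp_rw [nuT_restrict]
    exact pi_smul_const _ ENNReal.ofReal_ne_top _
  -- π restricted to B is π
  have hπB : π.restrict B = π := by
    rw [hπ, hBdef, pi_restrict_box]
    simp_rw [lebIco_restrict]
  -- π of the complement is zero
  have hπA₀ : π Bᶜ = 0 := by
    conv_lhs => rw [← hπB]
    rw [Measure.restrict_apply hBmeas.compl]
    simp
  have hπBone : π B = 1 := by
    have h := measure_compl (μ := π) hBmeas.compl (measure_ne_top π _)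
    rw [compl_compl, hπA₀, measure_univ, tsub_zero] at h
    exact h
  -- μ of B
  have hμBval : μ B = ENNReal.ofReal (q ^ n) := by
    rw [← Measure.restrict_apply_self μ B, hμB]
    simp [hπBone, ← ENNReal.ofReal_pow hq0]
  have hμA₀ : μ Bᶜ = ENNReal.ofReal (1 - q ^ n) := by
    rw [prob_compl_eq_one_sub hBmeas, hμBval,
      ENNReal.ofReal_sub _ hqn0, ENNReal.ofReal_one]
  -- part (a)
  have parta : ∀ A : Set (Fin n → ℝ), MeasurableSet A →
      (μ A).toReal - (π A).toReal ≤ 1 - q ^ n := by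
    intro A hA
    have key : μ A ≤ π A + ENNReal.ofReal (1 - q ^ n) := by
      calc μ A = μ (A ∩ B) + μ (A \ B) := (measure_inter_add_diff A hBmeas).symm
        _ ≤ μ (A ∩ B) + μ Bᶜ :=
            add_le_add le_rfl (measure_mono (fun x hx => hx.2))
        _ = (μ.restrict B) A + μ Bᶜ := by rw [Measure.restrict_apply hA]
        _ = (ENNReal.ofReal q) ^ n * π A + ENNReal.ofReal (1 - q ^ n) := by
            rw [hμB, hμA₀]; rfl
        _ ≤ 1 * π A + ENNReal.ofReal (1 - q ^ n) := by
            gcongr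
            exact pow_le_one₀ zero_le (ENNReal.ofReal_le_one.mpr hq1)
        _ = π A + ENNReal.ofReal (1 - q ^ n) := by rw [one_mul]
    have hfin : π A + ENNReal.ofReal (1 - q ^ n) ≠ ⊤ :=
      ENNReal.add_ne_top.mpr ⟨measure_ne_top π A, ENNReal.ofReal_ne_top⟩
    have h2 := ENNReal.toReal_mono hfin key
    rw [ENNReal.toReal_add (measure_ne_top π A) ENNReal.ofReal_ne_top,
      ENNReal.toReal_ofReal (by linarith)] at h2
    linarith
  have partb : (μ {x | ∃ i, x i = 0}).toReal = 1 - q ^ n := by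
    rw [hA₀, hμA₀, ENNReal.toReal_ofReal (by linarith)]
  have partc : π {x | ∃ i, x i = 0} = 0 := by rw [hA₀]; exact hπA₀
  refine ⟨parta, partb, partc, ⟨?_, ?_⟩⟩
  · exact ⟨{x | ∃ i, x i = 0}, by rw [hA₀]; exact hBmeas.compl, by
      rw [partb, partc]; simp⟩
  · rintro r ⟨A, hA, rfl⟩
    exact parta A hA
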